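/- arXiv:2205.01383 — 2 statements merged into one kernel-verified Lean document; each statement's English description precedes it below -/
import Mathlib

section
/- For all n ≥ 1 and 1 ≤ k ≤ n, the number F(n,k) of right-to-left partial Łukasiewicz paths of length n ending at height k whose last step is an up-step satisfies n · F(n,k) = k · C(2n−k−1, n−1). -/
/-- A right-to-left partial Łukasiewicz path of length `n` ending at height `k`:
a list of `n` integer steps, each `≤ 1`, with all partial sums `≥ 0`
and total sum `k`. -/
def IsRLPartialLuk (w : List ℤ) (n k : ℕ) : Prop :=
  w.length = n ∧ (∀ x ∈ w, x ≤ 1) ∧ (∀ i, 0 ≤ (w.take i).sum) ∧ w.sum = k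

/-- The last step of the path is an up-step, i.e. `w_n = 1`. -/
def LastStepUp (w : List ℤ) : Prop := w.getLast? = some 1

def lukP : ℕ → ℕ → Finset (List ℤ)
  | 0, j => if j = 0 then {([] : List ℤ)} else ∅
  | (m+1), j => (Finset.Ico (j-1) (m+1)).biUnion
      (fun i => (lukP m i).image (fun u => u ++ [(j : ℤ) - (i : ℤ)]))

lemma list_sum_le_length (l : List ℤ) (h : ∀ x ∈ l, x ≤ 1) : l.sum ≤ l.length := by
  induction l with
  | nil => simp
  | cons a t ih =>
    simp only [List.sum_cons, List.length_cons]
    have ha := h a (by simp)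
    have := ih (fun x hx => h x (by simp [hx]))
    push_cast
    omega

lemma mem_lukP (m : ℕ) : ∀ (j : ℕ) (w : List ℤ), w ∈ lukP m j ↔ IsRLPartialLuk w m j := by
  induction m with
  | zero =>
    intro j w
    constructor
    · intro hw
      rcases Nat.eq_zero_or_pos j with hj | hj
      · subst hj
        simp [lukP] at hw
        subst hw
        refine ⟨rfl, by simp, by simp, by simp⟩
      · simp [lukP, Nat.pos_iff_ne_zero.mp hj] at hw
    · rintro ⟨h1, _, _, h4⟩
      have : w = [] := List.length_eq_zero_iff.mp h1
      subst this
      simp at h4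
      have : j = 0 := by exact_mod_cast h4.symm
      subst this
      simp [lukP]
  | succ m ih =>
    intro j w
    constructor
    · intro hw
      simp only [lukP, Finset.mem_biUnion, Finset.mem_Ico, Finset.mem_image] at hw
      obtain ⟨i, ⟨hi1, hi2⟩, u, hu, rfl⟩ := hw
      obtain ⟨hl, he, hp, hs⟩ := (ih i u).mp hu
      refine ⟨by simp [hl], ?_, ?_, ?_⟩
      · intro x hx
        rcases List.mem_append.mp hx with h | h
        · exact he x h
        · simp at h
          subst h
          have : (j:ℤ) ≤ (i:ℤ) + 1 := by exact_mod_cast by omega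
          linarith
      · intro t
        rcases le_or_gt t m with ht | ht
        · rw [List.take_append_of_le_length (by omega)]
          exact hp t
        · rw [List.take_of_length_le (by simp [hl]; omega)]
          simp [List.sum_append, hs]
      · simp [List.sum_append, hs]
    · rintro ⟨hl, he, hp, hs⟩
      have hne : w ≠ [] := by
        intro h; subst h; simp at hl
      set u := w.dropLast with hu
      set a := w.getLast hne with ha
      have hw : w = u ++ [a] := (List.dropLast_append_getLast hne).symm
      have hul : u.length = m := by simp [hu, hl]
      have hut : u = w.take m := by
        rw [hu, List.dropLast_eq_take, hl]; rfl
      have husum : 0 ≤ u.sum := by rw [hut]; exact hp m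
      have hasum : a = (j : ℤ) - u.sum := by
        have : w.sum = u.sum + a := by rw [hw]; simp
        omega
      have hale : a ≤ 1 := he a (by rw [hw]; simp)
      have hule : u.sum ≤ m := by
        have := list_sum_le_length u (fun x hx => he x (by rw [hw]; exact List.mem_append.mpr (Or.inl hx)))
        rwa [hul] at this
      set i := u.sum.toNat with hi
      have hiu : (i : ℤ) = u.sum := Int.toNat_of_nonneg husum
      simp only [lukP, Finset.mem_biUnion, Finset.mem_Ico, Finset.mem_image]
      refine ⟨i, ⟨by omega, by omega⟩, u, ?_, ?_⟩
      · refine (ih i u).mpr ⟨hul, ?_, ?_, hiu.symm⟩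
        · intro x hx; exact he x (by rw [hw]; exact List.mem_append.mpr (Or.inl hx))
        · intro t
          rw [hut, List.take_take]
          exact hp _
      · rw [hw, hiu, ← hasum]

lemma card_lukP_succ (m j : ℕ) :
    (lukP (m+1) j).card = ∑ i ∈ Finset.Ico (j-1) (m+1), (lukP m i).card := by
  show ((Finset.Ico (j-1) (m+1)).biUnion _).card = _
  rw [Finset.card_biUnion]
  · refine Finset.sum_congr rfl (fun i _ => ?_)
    apply Finset.card_image_of_injective
    intro a b h
    have := congrArg List.dropLast h
    simpa using this
  · intro x _ y _ hxy
    rw [Function.onFun, Finset.disjoint_left]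
    rintro w hwx hwy
    simp only [Finset.mem_image] at hwx hwy
    obtain ⟨u, _, rfl⟩ := hwx
    obtain ⟨v, _, hv⟩ := hwy
    have h1 : (u ++ [(j:ℤ) - x]).getLast? = some ((j:ℤ) - x) := by
      simp [List.getLast?_append]
    have h2 : (v ++ [(j:ℤ) - y]).getLast? = some ((j:ℤ) - y) := by
      simp [List.getLast?_append]
    rw [hv, h1] at h2
    have : (j:ℤ) - x = (j:ℤ) - y := by exact_mod_cast Option.some.inj h2
    exact hxy (by omega)

lemma sum_Ico_choose_eq (m p c : ℕ) (hp : p ≤ m) (hc : m ≤ c) :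
    ∑ i ∈ Finset.Ico p (m+1), Nat.choose (2*m - i) c = Nat.choose (2*m + 1 - p) (c+1) := by
  obtain ⟨N, hN, hN1⟩ : ∃ N, m + 1 = p + N ∧ 1 ≤ N := ⟨m + 1 - p, by omega, by omega⟩
  rw [Finset.sum_Ico_eq_sum_range]
  have hrw : m + 1 - p = N := by omega
  rw [hrw]
  have hrefl := Finset.sum_range_reflect (fun r => Nat.choose (2*m - (p + r)) c) N
  rw [← hrefl]
  have hcongr : ∀ r ∈ Finset.range N, Nat.choose (2*m - (p + (N - 1 - r))) c
      = Nat.choose (m + r) c := by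
    intro r hr
    simp only [Finset.mem_range] at hr
    congr 1
    omega
  rw [Finset.sum_congr rfl hcongr]
  have h5 : ∑ r ∈ Finset.range N, Nat.choose (m + r) c
      = ∑ t ∈ Finset.Ico m (m + N), Nat.choose t c := by
    rw [Finset.sum_Ico_eq_sum_range]
    have hrw2 : m + N - m = N := by omega
    rw [hrw2]
  rw [h5]
  have hsub : ∑ t ∈ Finset.Ico m (m + N), Nat.choose t c
      = ∑ t ∈ Finset.Icc c (m + N - 1), Nat.choose t c := by
    refine (Finset.sum_subset ?_ ?_).symm
    · intro t ht
      simp only [Finset.mem_Icc] at ht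
      simp only [Finset.mem_Ico]
      omega
    · intro t ht hts
      simp only [Finset.mem_Ico] at ht
      simp only [Finset.mem_Icc, not_and, not_le] at hts
      exact Nat.choose_eq_zero_of_lt (by omega)
  rw [hsub, Nat.sum_Icc_choose]
  congr 1
  omega

lemma card_lukP (m : ℕ) : ∀ j, j ≤ 2*m →
    (lukP m j).card + Nat.choose (2*m - j) (m+1) = Nat.choose (2*m - j) m := by
  induction m with
  | zero =>
    intro j hj
    interval_cases j
    simp [lukP]
  | succ m ih =>
    intro j hj
    rw [card_lukP_succ]
    by_cases hbig : m + 2 ≤ j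
    · have hempty : Finset.Ico (j-1) (m+1) = ∅ := Finset.Ico_eq_empty (by omega)
      rw [hempty]
      simp only [Finset.sum_empty]
      have h1 : Nat.choose (2*(m+1) - j) (m+1+1) = 0 := Nat.choose_eq_zero_of_lt (by omega)
      have h2 : Nat.choose (2*(m+1) - j) (m+1) = 0 := Nat.choose_eq_zero_of_lt (by omega)
      omega
    · have hsum : ∑ i ∈ Finset.Ico (j-1) (m+1), (lukP m i).card
          + ∑ i ∈ Finset.Ico (j-1) (m+1), Nat.choose (2*m - i) (m+1)
          = ∑ i ∈ Finset.Ico (j-1) (m+1), Nat.choose (2*m - i) m := by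
        rw [← Finset.sum_add_distrib]
        refine Finset.sum_congr rfl (fun i hi => ?_)
        simp only [Finset.mem_Ico] at hi
        exact ih i (by omega)
      have hS1 := sum_Ico_choose_eq m (j-1) m (by omega) (le_refl m)
      have hS2 := sum_Ico_choose_eq m (j-1) (m+1) (by omega) (by omega)
      rw [hS1, hS2] at hsum
      by_cases hj0 : j = 0
      · subst hj0
        have e1 : 2*m+1-(0-1) = 2*m+1 := by omega
        rw [e1] at hsum
        have e2 : 2*(m+1) - 0 = 2*m+2 := by omega
        rw [e2]
        have pa : (2*m+2).choose (m+1) = (2*m+1).choose m + (2*m+1).choose (m+1) := by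
          rw [show 2*m+2 = (2*m+1)+1 by ring]
          exact Nat.choose_succ_succ' (2*m+1) m
        have pb : (2*m+2).choose (m+1+1) = (2*m+1).choose (m+1) + (2*m+1).choose (m+1+1) := by
          rw [show 2*m+2 = (2*m+1)+1 by ring]
          exact Nat.choose_succ_succ' (2*m+1) (m+1)
        have hc : (2*m+1).choose m = (2*m+1).choose (m+1) := by
          rw [← Nat.choose_symm (by omega : m+1 ≤ 2*m+1)]
          congr 1
          omega
        omega
      · have e1 : 2*m+1-(j-1) = 2*(m+1) - j := by omega
        rw [e1] at hsum
        omega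

theorem rlPartialLuk_lastUp_count (n k : ℕ) (hk1 : 1 ≤ k) (hk : k ≤ n) :
    n * Nat.card {w : List ℤ // IsRLPartialLuk w n k ∧ LastStepUp w} =
      k * Nat.choose (2 * n - k - 1) (n - 1) := by
  obtain ⟨m, rfl⟩ : ∃ m, n = m + 1 := ⟨n-1, by omega⟩
  obtain ⟨j, rfl⟩ : ∃ j, k = j + 1 := ⟨k-1, by omega⟩
  have hjm : j ≤ m := by omega
  have hset : {w : List ℤ | IsRLPartialLuk w (m+1) (j+1) ∧ LastStepUp w}
      = ↑((lukP m j).image (fun u => u ++ [(1:ℤ)])) := by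
    ext w
    simp only [Set.mem_setOf_eq, Finset.coe_image, Set.mem_image, Finset.mem_coe]
    constructor
    · rintro ⟨⟨hl, he, hp, hs⟩, hlast⟩
      have hne : w ≠ [] := by intro h; subst h; simp at hl
      have hlast1 : w.getLast hne = 1 := by
        have h2 : w.getLast? = some (w.getLast hne) := List.getLast?_eq_getLast hne
        rw [hlast] at h2
        exact (Option.some.inj h2).symm
      have hw : w.dropLast ++ [w.getLast hne] = w := List.dropLast_append_getLast hne
      refine ⟨w.dropLast, ?_, ?_⟩
      · apply (mem_lukP m j w.dropLast).mpr
        have hdl : w.dropLast = w.take m := by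
          rw [List.dropLast_eq_take, hl]
          rfl
        refine ⟨by simp [hl], ?_, ?_, ?_⟩
        · intro x hx
          exact he x (List.dropLast_subset w hx)
        · intro t
          rw [hdl, List.take_take]
          exact hp _
        · have hsum : w.dropLast.sum + w.getLast hne = w.sum := by
            conv_rhs => rw [← hw]
            simp
          rw [hlast1, hs] at hsum
          push_cast at hsum ⊢
          omega
      · rw [← hlast1]
        exact hw
    · rintro ⟨u, hu, rfl⟩
      obtain ⟨hl, he, hp, hs⟩ := (mem_lukP m j u).mp hu
      constructor
      · refine ⟨by simp [hl], ?_, ?_, ?_⟩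
        · intro x hx
          rcases List.mem_append.mp hx with h | h
          · exact he x h
          · simp at h
            subst h
            norm_num
        · intro t
          rcases le_or_gt t m with ht | ht
          · rw [List.take_append_of_le_length (by omega : t ≤ u.length)]
            exact hp t
          · rw [List.take_of_length_le (by simp [hl]; omega)]
            simp [List.sum_append, hs]
            positivity
        · simp [List.sum_append, hs]
      · show (u ++ [(1:ℤ)]).getLast? = some 1
        simp [List.getLast?_append]
  have hcard : Nat.card {w : List ℤ // IsRLPartialLuk w (m+1) (j+1) ∧ LastStepUp w}
      = (lukP m j).card := by
    have h0 : Nat.card {w : List ℤ // IsRLPartialLuk w (m+1) (j+1) ∧ LastStepUp w}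
        = ({w : List ℤ | IsRLPartialLuk w (m+1) (j+1) ∧ LastStepUp w} : Set (List ℤ)).ncard :=
      Nat.card_coe_set_eq _
    rw [h0, hset, Set.ncard_coe_finset]
    apply Finset.card_image_of_injective
    intro a b h
    simpa using congrArg List.dropLast h
  rw [hcard]
  have hkey := card_lukP m j (by omega)
  have e1 : 2*(m+1) - (j+1) - 1 = 2*m - j := by omega
  have e2 : (m+1) - 1 = m := by omega
  rw [e1, e2]
  have hc2 : Nat.choose (2*m-j) (m+1) * (m+1) = Nat.choose (2*m-j) m * (2*m-j - m) :=
    Nat.choose_succ_right_eq (2*m-j) m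
  have e3 : 2*m - j - m = m - j := by omega
  rw [e3] at hc2
  set A := (lukP m j).card with hA
  set C1 := Nat.choose (2*m-j) m with hC1
  set C2 := Nat.choose (2*m-j) (m+1) with hC2
  have h4 : (m+1)*A + (m+1)*C2 = (m+1)*C1 := by rw [← Nat.mul_add, hkey]
  have h5 : (m+1)*C2 = (m-j)*C1 := by rw [Nat.mul_comm (m+1) C2, hc2, Nat.mul_comm]
  have h6 : (m-j)*C1 + (j+1)*C1 = (m+1)*C1 := by
    rw [← Nat.add_mul]
    congr 1
    omega
  rw [h5] at h4
  have h7 : (m+1)*A + (m-j)*C1 = (j+1)*C1 + (m-j)*C1 := by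
    rw [h4, ← h6]
    ring
  exact Nat.add_right_cancel h7
end

section
/- For all n ≥ 1 and 0 ≤ k ≤ n, the number G(n,k) of right-to-left partial Łukasiewicz paths of length n ending at height k whose last step is a down-step satisfies (n+1) · G(n,k) = (k+3) · C(2n−k−2, n) (with the convention that C(a,b) = 0 when a < b). -/
/-- The last step of the path is a down-step, i.e. `w_n ≤ -1`. -/
def LastStepDown (w : List ℤ) : Prop := ∃ x, w.getLast? = some x ∧ x ≤ -1

namespace RLLukAux

/-- Finset of right-to-left partial Łukasiewicz paths, built recursively on length. -/
def pathsF : ℕ → ℕ → Finset (List ℤ)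
  | 0, k => if k = 0 then {([] : List ℤ)} else ∅
  | n+1, k => (Finset.Ico (k-1) (n+1)).biUnion fun j =>
      (pathsF n j).image (fun u => u ++ [(k : ℤ) - (j : ℤ)])

lemma sum_le_length (l : List ℤ) (h : ∀ x ∈ l, x ≤ 1) : l.sum ≤ (l.length : ℤ) := by
  induction l with
  | nil => simp
  | cons a t ih =>
    simp only [List.sum_cons, List.length_cons]
    have h1 := h a (by simp)
    have h2 := ih (fun x hx => h x (by simp [hx]))
    push_cast
    omega

lemma mem_pathsF : ∀ (n k : ℕ) (w : List ℤ), w ∈ pathsF n k ↔ IsRLPartialLuk w n k := by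
  intro n
  induction n with
  | zero =>
    intro k w
    constructor
    · intro hw
      by_cases hk : k = 0
      · subst hk
        simp only [pathsF, if_true, Finset.mem_singleton] at hw
        subst hw
        exact ⟨rfl, by simp, by simp, by simp⟩
      · simp [pathsF, hk] at hw
    · rintro ⟨h1, h2, h3, h4⟩
      have hw : w = [] := List.length_eq_zero_iff.mp h1
      subst hw
      have : k = 0 := by simpa using h4.symm
      subst this
      simp [pathsF]
  | succ n ih =>
    intro k w
    constructor
    · intro hw
      simp only [pathsF, Finset.mem_biUnion, Finset.mem_image, Finset.mem_Ico] at hw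
      obtain ⟨j, ⟨hj1, hj2⟩, u, hu, rfl⟩ := hw
      obtain ⟨l1, l2, l3, l4⟩ := (ih j u).mp hu
      refine ⟨by simp [l1], ?_, ?_, ?_⟩
      · intro x hx
        rcases List.mem_append.mp hx with hx | hx
        · exact l2 x hx
        · simp only [List.mem_singleton] at hx
          subst hx
          omega
      · intro i
        by_cases hi : i ≤ n
        · rw [List.take_append_of_le_length (by omega : i ≤ u.length)]
          exact l3 i
        · rw [List.take_of_length_le (by simp [l1]; omega)]
          rw [List.sum_append, l4]
          simp
      · rw [List.sum_append, l4]
        simp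
    · rintro ⟨h1, h2, h3, h4⟩
      have hne : w ≠ [] := by
        intro h; subst h; simp at h1
      have hw : w.dropLast ++ [w.getLast hne] = w := List.dropLast_append_getLast hne
      set u := w.dropLast with hudef
      set x := w.getLast hne with hxdef
      have hul : u.length = n := by
        simp [hudef, h1]
      have hx1 : x ≤ 1 := h2 x (List.getLast_mem hne)
      have husub : ∀ y ∈ u, y ∈ w := fun y hy => (List.dropLast_sublist w).subset hy
      have hus : 0 ≤ u.sum := by
        have h := h3 n
        rw [← hw, List.take_append_of_le_length (le_of_eq hul.symm), ← hul,
          List.take_length] at h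
        exact h
      have husl : u.sum ≤ (n : ℤ) := by
        have := sum_le_length u (fun y hy => h2 y (husub y hy))
        rwa [hul] at this
      obtain ⟨j, hj⟩ : ∃ j : ℕ, (j : ℤ) = u.sum := ⟨u.sum.toNat, Int.toNat_of_nonneg hus⟩
      have hsum : (j : ℤ) + x = (k : ℤ) := by
        rw [hj]
        have := h4
        rw [← hw, List.sum_append] at this
        simpa using this
      have hu_luk : IsRLPartialLuk u n j := by
        refine ⟨hul, fun y hy => h2 y (husub y hy), ?_, hj.symm⟩
        intro i
        by_cases hi : i ≤ n
        · have h := h3 i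
          rw [← hw, List.take_append_of_le_length (by omega : i ≤ u.length)] at h
          exact h
        · rw [List.take_of_length_le (by omega)]
          omega
      simp only [pathsF, Finset.mem_biUnion, Finset.mem_image, Finset.mem_Ico]
      refine ⟨j, ⟨by omega, by omega⟩, u, (ih j u).mpr hu_luk, ?_⟩
      rw [show (k : ℤ) - (j : ℤ) = x by omega, hw]

lemma card_biUnion_image (m k : ℕ) (s : Finset ℕ) :
    (s.biUnion fun j => (pathsF m j).image (fun u => u ++ [(k : ℤ) - (j : ℤ)])).card
      = ∑ j ∈ s, (pathsF m j).card := by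
  rw [Finset.card_biUnion]
  · exact Finset.sum_congr rfl fun j _ =>
      Finset.card_image_of_injective _ (List.append_left_injective _)
  · intro a _ b _ hab
    rw [Function.onFun, Finset.disjoint_left]
    rintro w hw1 hw2
    simp only [Finset.mem_image] at hw1 hw2
    obtain ⟨u, _, rfl⟩ := hw1
    obtain ⟨v, _, hvw⟩ := hw2
    have h1 : some ((k : ℤ) - (b : ℤ)) = some ((k : ℤ) - (a : ℤ)) := by
      rw [← List.getLast?_concat (l := v), ← List.getLast?_concat (l := u), hvw]
    have h2 : (a : ℤ) = (b : ℤ) := by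
      injection h1 with h1
      omega
    exact hab (Nat.cast_injective h2)

lemma card_pathsF_succ (n k : ℕ) :
    (pathsF (n+1) k).card = ∑ j ∈ Finset.Ico (k-1) (n+1), (pathsF n j).card := by
  show ((Finset.Ico (k-1) (n+1)).biUnion fun j =>
      (pathsF n j).image (fun u => u ++ [(k : ℤ) - (j : ℤ)])).card = _
  exact card_biUnion_image n k _

lemma key_binom (j d : ℕ) :
    (j+d+2)*((j+1)*Nat.choose (j+2*d) (j+d)) + (j+d+1)*((j+3)*Nat.choose (j+2*d) (j+d+1))
      = (j+d+1)*((j+2)*Nat.choose (j+2*d+1) (j+d+1)) := by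
  have hp : Nat.choose (j+2*d+1) (j+d+1)
      = Nat.choose (j+2*d) (j+d) + Nat.choose (j+2*d) (j+d+1) := by
    have := Nat.choose_succ_succ (j+2*d) (j+d)
    simpa using this
  have hr := Nat.choose_succ_right_eq (j+2*d) (j+d)
  have h2 : j+2*d - (j+d) = d := by omega
  rw [h2] at hr
  rw [hp]
  zify at hr ⊢
  linear_combination hr

lemma telesum (n : ℕ) : ∀ d a, a + d = n →
    ∑ j ∈ Finset.Ico a n, (n+1)*((j+1)*Nat.choose (2*n-2-j) (n-1))
      = n*((a+2)*Nat.choose (2*n-1-a) n) := by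
  intro d
  induction d with
  | zero =>
    intro a ha
    simp only [Nat.add_zero] at ha
    subst ha
    rcases Nat.eq_zero_or_pos a with h | h
    · subst h; simp
    · rw [Finset.Ico_self, Finset.sum_empty, Nat.choose_eq_zero_of_lt (by omega)]
      simp
  | succ d ihd =>
    intro a ha
    rw [Finset.sum_eq_sum_Ico_succ_bot (by omega)]
    rw [ihd (a+1) (by omega)]
    set e := n - 1 - a with he
    have h1 : 2*n-2-a = a + 2*e := by omega
    have h2 : n-1 = a + e := by omega
    have h3 : 2*n-1-a = a + 2*e + 1 := by omega
    have h4 : 2*n-1-(a+1) = a + 2*e := by omega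
    rw [h1, h2, h3, h4]
    have hn1 : n + 1 = a + e + 2 := by omega
    have hn2 : n = a + e + 1 := by omega
    rw [hn1, hn2]
    exact key_binom a e

lemma two_choose (n : ℕ) : 2 * Nat.choose (2*n+1) (n+1) = Nat.choose (2*n+2) (n+1) := by
  have hp : Nat.choose (2*n+2) (n+1)
      = Nat.choose (2*n+1) n + Nat.choose (2*n+1) (n+1) := by
    have := Nat.choose_succ_succ (2*n+1) n
    simpa using this
  have hs : Nat.choose (2*n+1) n = Nat.choose (2*n+1) (n+1) := by
    rw [← Nat.choose_symm (by omega : n+1 ≤ 2*n+1)]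
    congr 1
    omega
  omega

lemma card_pathsF (n : ℕ) : ∀ k, k ≤ n →
    (n+1) * (pathsF n k).card = (k+1) * Nat.choose (2*n-k) n := by
  induction n with
  | zero =>
    intro k hk
    interval_cases k
    simp [pathsF]
  | succ n ih =>
    intro k hk
    have hsum : (n+1) * ((n+2) * (pathsF (n+1) k).card)
        = ∑ j ∈ Finset.Ico (k-1) (n+1), (n+2)*((j+1)*Nat.choose (2*n-j) n) := by
      rw [card_pathsF_succ, Finset.mul_sum, Finset.mul_sum]
      refine Finset.sum_congr rfl fun j hj => ?_
      have hj' : j ≤ n := by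
        simp only [Finset.mem_Ico] at hj
        omega
      rw [show (n+1) * ((n+2) * (pathsF n j).card) = (n+2) * ((n+1) * (pathsF n j).card) by ring,
        ih j hj']
    have htele := telesum (n+1) ((n+1) - (k-1)) (k-1) (by omega)
    have hform : ∑ j ∈ Finset.Ico (k-1) (n+1), (n+1+1)*((j+1)*Nat.choose (2*(n+1)-2-j) (n+1-1))
        = ∑ j ∈ Finset.Ico (k-1) (n+1), (n+2)*((j+1)*Nat.choose (2*n-j) n) := by
      refine Finset.sum_congr rfl fun j _ => ?_
      rw [show 2*(n+1)-2-j = 2*n-j by omega, show n+1-1 = n by omega]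
    rw [hform] at htele
    rw [htele] at hsum
    rcases Nat.eq_zero_or_pos k with hk0 | hk0
    · subst hk0
      have h1 : (2*(n+1)-1-(0-1)) = 2*n+1 := by omega
      rw [h1] at hsum
      have h2 : (n+2) * (pathsF (n+1) 0).card = (0+2)*Nat.choose (2*n+1) (n+1) :=
        Nat.eq_of_mul_eq_mul_left (by omega : 0 < n+1) hsum
      have h3 : 2*(n+1)-0 = 2*n+2 := by omega
      rw [h3, ← two_choose]
      calc (n+1+1) * (pathsF (n+1) 0).card
          = (n+2) * (pathsF (n+1) 0).card := by ring
        _ = (0+2) * Nat.choose (2*n+1) (n+1) := h2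
        _ = (0+1) * (2 * Nat.choose (2*n+1) (n+1)) := by ring
    · have h1 : 2*(n+1)-1-(k-1) = 2*(n+1)-k := by omega
      have h2 : k-1+2 = k+1 := by omega
      rw [h1, h2] at hsum
      exact Nat.eq_of_mul_eq_mul_left (by omega : 0 < n+1) hsum

end RLLukAux

open RLLukAux in
theorem rlPartialLuk_lastDown_count (n k : ℕ) (hn : 1 ≤ n) (hk : k ≤ n) :
    (n + 1) * Nat.card {w : List ℤ // IsRLPartialLuk w n k ∧ LastStepDown w} =
      (k + 3) * Nat.choose (2 * n - k - 2) n := by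
  obtain ⟨m, rfl⟩ : ∃ m, n = m + 1 := ⟨n - 1, by omega⟩
  set D : Finset (List ℤ) := (Finset.Ico (k+1) (m+1)).biUnion fun j =>
    (pathsF m j).image (fun u => u ++ [(k : ℤ) - (j : ℤ)]) with hD
  have hmem : ∀ w : List ℤ, (IsRLPartialLuk w (m+1) k ∧ LastStepDown w) ↔ w ∈ D := by
    intro w
    constructor
    · rintro ⟨h1, x, hx1, hx2⟩
      have hw := (mem_pathsF (m+1) k w).mpr h1
      simp only [pathsF, Finset.mem_biUnion, Finset.mem_image, Finset.mem_Ico] at hw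
      obtain ⟨j, ⟨hj1, hj2⟩, u, hu, rfl⟩ := hw
      have hlast : x = (k : ℤ) - (j : ℤ) := by
        rw [List.getLast?_concat] at hx1
        injection hx1 with h
        omega
      subst hlast
      simp only [hD, Finset.mem_biUnion, Finset.mem_image, Finset.mem_Ico]
      exact ⟨j, ⟨by omega, hj2⟩, u, hu, rfl⟩
    · intro hw
      simp only [hD, Finset.mem_biUnion, Finset.mem_image, Finset.mem_Ico] at hw
      obtain ⟨j, ⟨hj1, hj2⟩, u, hu, rfl⟩ := hw
      constructor
      · refine (mem_pathsF (m+1) k _).mp ?_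
        simp only [pathsF, Finset.mem_biUnion, Finset.mem_image, Finset.mem_Ico]
        exact ⟨j, ⟨by omega, hj2⟩, u, hu, rfl⟩
      · exact ⟨(k : ℤ) - (j : ℤ), List.getLast?_concat, by omega⟩
  have hcard : Nat.card {w : List ℤ // IsRLPartialLuk w (m+1) k ∧ LastStepDown w} = D.card := by
    rw [Nat.card_congr (Equiv.subtypeEquivRight hmem)]
    exact Nat.card_eq_finsetCard D
  rw [hcard]
  have hDcard : D.card = ∑ j ∈ Finset.Ico (k+1) (m+1), (pathsF m j).card :=
    card_biUnion_image m k _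
  rcases Nat.lt_or_ge k (m+1) with hkm | hkm
  · -- k ≤ m
    have hsum : (m+1) * ((m+2) * D.card)
        = ∑ j ∈ Finset.Ico (k+1) (m+1), (m+2)*((j+1)*Nat.choose (2*m-j) m) := by
      rw [hDcard, Finset.mul_sum, Finset.mul_sum]
      refine Finset.sum_congr rfl fun j hj => ?_
      have hj' : j ≤ m := by
        simp only [Finset.mem_Ico] at hj
        omega
      rw [show (m+1) * ((m+2) * (pathsF m j).card) = (m+2) * ((m+1) * (pathsF m j).card) by ring,
        card_pathsF m j hj']
    have htele := telesum (m+1) ((m+1) - (k+1)) (k+1) (by omega)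
    have hform : ∑ j ∈ Finset.Ico (k+1) (m+1), (m+1+1)*((j+1)*Nat.choose (2*(m+1)-2-j) (m+1-1))
        = ∑ j ∈ Finset.Ico (k+1) (m+1), (m+2)*((j+1)*Nat.choose (2*m-j) m) := by
      refine Finset.sum_congr rfl fun j _ => ?_
      rw [show 2*(m+1)-2-j = 2*m-j by omega, show m+1-1 = m by omega]
    rw [hform] at htele
    rw [htele] at hsum
    have h1 : 2*(m+1)-1-(k+1) = 2*(m+1)-k-2 := by omega
    have h2 : k+1+2 = k+3 := by omega
    rw [h1, h2] at hsum
    exact Nat.eq_of_mul_eq_mul_left (by omega : 0 < m+1) hsum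
  · -- k = m+1: both sides zero
    have hk1 : k = m + 1 := by omega
    subst hk1
    rw [hDcard, show Finset.Ico (m+1+1) (m+1) = ∅ from Finset.Ico_eq_empty (by omega),
      Finset.sum_empty, Nat.mul_zero]
    rw [Nat.choose_eq_zero_of_lt (by omega : 2*(m+1)-(m+1)-2 < m+1)]
    simp
end
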